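/- For integers r ≥ 1 and b, set T_b^r(t) = (1/(1-t^r)) · Σ_{i=1}^{r-1} (\overline{bi}(r-\overline{bi})/(2r)) t^i ∈ ℚ(t), where \overline{m} denotes the least nonnegative residue of m modulo r (so T_b^1 = 0). Let r ≥ 2 and a be integers with 0 < a < r and gcd(a,r) = 1, let b be the inverse of a modulo r, b₁ the inverse of r modulo a, and b₂ the inverse of r modulo r-a. Then in ℚ(t): t(1+t)/(2(1-t)^3 · r·a·(r-a)) − T_b^r(t) + T_{b₁}^a(t) + T_{b₂}^{r-a}(t) = t^r / ((1-t^r)(1-t^a)(1-t^{r-a})). -/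

import Mathlib

set_option linter.unusedSectionVars false
set_option linter.unusedVariables false
set_option maxHeartbeats 1000000


/-- `T_b^r(t) = (1/(1-t^r)) Σ_{i=1}^{r-1} (\overline{bi}(r-\overline{bi})/(2r)) tⁱ`
in `ℚ(t)`, where `\overline{m}` is the least nonnegative residue mod `r`
(so `T_b^1 = 0`). -/
noncomputable def Tterm (r b : ℕ) : RatFunc ℚ :=
  (1 / (1 - RatFunc.X ^ r)) *
    ∑ i ∈ Finset.Icc 1 (r - 1),
      RatFunc.C ((((b * i) % r : ℕ) : ℚ)
          * ((r : ℚ) - (((b * i) % r : ℕ) : ℚ)) / (2 * (r : ℚ)))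
        * RatFunc.X ^ i

namespace S10

def resi (k b : ℕ) (m : ℤ) : ℤ := ((b:ℤ) * m) % (k:ℤ)

noncomputable def fQ (k b : ℕ) (m : ℤ) : ℚ :=
  (resi k b m : ℚ) * ((k:ℚ) - (resi k b m : ℚ)) / (2 * (k:ℚ))

noncomputable def LL (r a c b b₁ b₂ : ℕ) (m : ℤ) : ℚ :=
  (m:ℚ)^2/(2*(r:ℚ)*(a:ℚ)*(c:ℚ)) - fQ r b m + fQ a b₁ m + fQ c b₂ m

section resi
variable {k b : ℕ}

lemma resi_nonneg (hk : 0 < k) (m : ℤ) : 0 ≤ resi k b m :=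
  Int.emod_nonneg _ (by exact_mod_cast hk.ne')

lemma resi_lt (hk : 0 < k) (m : ℤ) : resi k b m < k :=
  Int.emod_lt_of_pos _ (by exact_mod_cast hk)

lemma resi_period (m t : ℤ) : resi k b (m + (k:ℤ) * t) = resi k b m := by
  unfold resi
  rw [mul_add, ← mul_assoc, mul_comm (b:ℤ) (k:ℤ), mul_assoc]
  apply Int.add_mul_emod_self_left

lemma resi_zero : resi k b 0 = 0 := by simp [resi]

lemma fQ_eq (m : ℤ) : fQ k b m = (resi k b m : ℚ) * ((k:ℚ) - (resi k b m : ℚ)) / (2 * (k:ℚ)) := rfl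

lemma fQ_zero : fQ k b 0 = 0 := by simp [fQ, resi_zero]

lemma fQ_period (m t : ℤ) : fQ k b (m + (k:ℤ) * t) = fQ k b m := by
  unfold fQ; rw [resi_period]

lemma fQ_neg (hk : 0 < k) (m : ℤ) : fQ k b (-m) = fQ k b m := by
  have h1 : (0:ℤ) < (k:ℤ) := by exact_mod_cast hk
  set j := resi k b m with hj
  set j' := resi k b (-m) with hj'
  have hd : (k:ℤ) ∣ j + j' := by
    apply Int.dvd_of_emod_eq_zero
    rw [hj, hj', resi, resi, ← Int.add_emod]
    simp [mul_neg]
  have h0 : 0 ≤ j + j' := add_nonneg (resi_nonneg hk _) (resi_nonneg hk _)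
  have h2 : j + j' < 2 * k := by
    have := resi_lt (b := b) hk m
    have := resi_lt (b := b) hk (-m)
    omega
  have : j + j' = 0 ∨ j + j' = k := by
    obtain ⟨t, ht⟩ := hd
    have ht0 : 0 ≤ t := by nlinarith
    have ht2 : t < 2 := by nlinarith
    interval_cases t <;> omega
  rcases this with h | h
  · have hj0 : j = 0 := by have := resi_nonneg (k:=k) (b:=b) hk m; have := resi_nonneg (k:=k) (b:=b) hk (-m); omega
    have hj'0 : j' = 0 := by have := resi_nonneg (k:=k) (b:=b) hk m; have := resi_nonneg (k:=k) (b:=b) hk (-m); omega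
    rw [fQ_eq, fQ_eq, ← hj, ← hj', hj0, hj'0]
  · have hq : (j' : ℚ) = (k:ℚ) - (j:ℚ) := by
      have h' : (j':ℤ) = (k:ℤ) - j := by omega
      exact_mod_cast congrArg (Int.cast : ℤ → ℚ) h'
    rw [fQ_eq, fQ_eq, ← hj, ← hj', hq]; ring

end resi


lemma int_dvd_cases (k V : ℤ) (hk : 0 < k) (hd : k ∣ V) (hlow : -k < V) (hhigh : V < 2*k) :
    V = 0 ∨ V = k := by
  obtain ⟨t, rfl⟩ := hd
  have h1 : -1 < t := by nlinarith
  have h2 : t < 2 := by nlinarith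
  interval_cases t
  · left; ring
  · right; ring

lemma resi_sub_dvd (k b : ℕ) (m : ℤ) : (k:ℤ) ∣ ((b:ℤ)*m - resi k b m) := by
  rw [resi, Int.emod_def]
  exact ⟨(b:ℤ)*m / k, by ring⟩

section ctx
variable {r a c b b₁ b₂ : ℕ}
  (ha : 0 < a) (hc : 0 < c) (hr : r = a + c)
  (hab : ((a:ℤ) * b) % r = 1)
  (hb1 : ((c:ℤ) * b₁) % a = 1 % a)
  (hb2 : ((a:ℤ) * b₂) % c = 1 % c)
  (hcop : Nat.Coprime a r)

include ha hc hr in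
lemma hr2 : (2:ℤ) ≤ r := by omega

include ha hc hr hab in
lemma dvd_ab : (r:ℤ) ∣ ((a:ℤ)*b - 1) := by
  apply Int.dvd_of_emod_eq_zero
  rw [Int.sub_emod, hab]
  have h1 : (1:ℤ) % r = 1 := Int.emod_eq_of_lt (by norm_num) (by omega)
  rw [h1]; simp

include hb1 in
lemma dvd_cb1 : (a:ℤ) ∣ ((c:ℤ)*b₁ - 1) := by
  apply Int.dvd_of_emod_eq_zero
  rw [Int.sub_emod, hb1, ← Int.sub_emod]; simp

include hb2 in
lemma dvd_ab2 : (c:ℤ) ∣ ((a:ℤ)*b₂ - 1) := by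
  apply Int.dvd_of_emod_eq_zero
  rw [Int.sub_emod, hb2, ← Int.sub_emod]; simp

include ha hc hr hab in
lemma resi_eq_zero_iff (m : ℤ) : resi r b m = 0 ↔ (r:ℤ) ∣ m := by
  constructor
  · intro h
    have h1 : (r:ℤ) ∣ (b:ℤ)*m := by
      have := resi_sub_dvd r b m; rw [h] at this; simpa using this
    have h2 : (r:ℤ) ∣ ((a:ℤ)*b - 1) := dvd_ab ha hc hr hab
    have : m = (a:ℤ)*((b:ℤ)*m) - ((a:ℤ)*b - 1)*m := by ring
    rw [this]
    exact dvd_sub (Dvd.dvd.mul_left h1 _) (Dvd.dvd.mul_right h2 _)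
  · intro h
    rw [resi, Int.emod_eq_zero_of_dvd]
    exact Dvd.dvd.mul_left h _

include hcop hr in
lemma cop_rc : IsCoprime (r:ℤ) (c:ℤ) := by
  have h1 : IsCoprime (r:ℤ) (a:ℤ) := (Nat.isCoprime_iff_coprime.mpr hcop).symm
  have h2 : IsCoprime (r:ℤ) (-(a:ℤ)) := h1.neg_right
  have h3 := h2.add_mul_left_right 1
  have : (c:ℤ) = -(a:ℤ) + (r:ℤ)*1 := by push_cast [hr]; ring
  rwa [this]

include hcop in
lemma cop_ra : IsCoprime (r:ℤ) (a:ℤ) := (Nat.isCoprime_iff_coprime.mpr hcop).symm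

include ha hc hr hab hcop in
lemma copZ : IsCoprime ((a:ℤ)+c) (a:ℤ) := by
  subst hr
  have h1 : IsCoprime (a:ℤ) ((a:ℤ)+c) := by
    have := Nat.isCoprime_iff_coprime.mpr hcop; push_cast at this; exact this
  exact h1.symm

include ha hc hr hab hcop in
lemma copZc : IsCoprime ((a:ℤ)+c) (c:ℤ) := by
  have h1 := copZ ha hc hr hab hcop
  have h2 := (h1.neg_right).add_mul_left_right 1
  have e : -(a:ℤ) + ((a:ℤ)+c)*1 = c := by ring
  rwa [e] at h2

include ha hc hr hab hb2 hcop in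
lemma lemA (m : ℤ) (hm1 : 1 ≤ m) (hm2 : m < (r:ℤ)) :
    (r:ℤ) * resi c b₂ m
      = m + (c:ℤ) * resi r b m - (if resi c b₂ m = 0 then (r:ℤ)*(c:ℤ) else 0) := by
  have w3 : (r:ℤ) ∣ ((a:ℤ)*b - 1) := dvd_ab ha hc hr hab
  have hzrm := resi_eq_zero_iff ha hc hr hab m
  have cop := copZc ha hc hr hab hcop
  subst hr
  push_cast at hm2 hzrm w3 ⊢
  set j := resi (a+c) b m with hj
  set v := resi c b₂ m with hv
  have haz : (0:ℤ) < a := by exact_mod_cast ha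
  have hcz : (0:ℤ) < c := by exact_mod_cast hc
  have hj0 : 0 ≤ j := resi_nonneg (by omega) m
  have hjr : j < (a:ℤ) + c := by have := resi_lt (b := b) (k := a+c) (by omega) m; push_cast at this; omega
  have hv0 : 0 ≤ v := resi_nonneg hc m
  have hvc : v < (c:ℤ) := by exact_mod_cast resi_lt (b := b₂) hc m
  have hj1 : 1 ≤ j := by
    rcases eq_or_lt_of_le hj0 with h | h
    · exfalso
      have : ((a:ℤ)+c) ∣ m := hzrm.mp h.symm
      have := Int.le_of_dvd (by omega) this
      omega
    · omega
  -- divisibility of D := m + c*j - (a+c)*v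
  have w1 : (c:ℤ) ∣ ((a:ℤ)*b₂ - 1) := dvd_ab2 hb2
  have w2 : (c:ℤ) ∣ ((b₂:ℤ)*m - v) := by rw [hv]; exact resi_sub_dvd c b₂ m
  have w5 : ((a:ℤ)+c) ∣ ((b:ℤ)*m - j) := by
    rw [hj]; have := resi_sub_dvd (a+c) b m; push_cast at this; exact this
  have hdc : (c:ℤ) ∣ (m + c*j - ((a:ℤ)+c)*v) := by
    have e : m + c*j - ((a:ℤ)+c)*v
        = -(((a:ℤ)*b₂ - 1)*m) + (a:ℤ)*((b₂:ℤ)*m - v) + (c:ℤ)*(j - v) := by ring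
    rw [e]
    exact dvd_add (dvd_add ((w1.mul_right m).neg_right) (w2.mul_left a)) (dvd_mul_right _ _)
  have hdr : ((a:ℤ)+c) ∣ (m + c*j - ((a:ℤ)+c)*v) := by
    have w4 : ((a:ℤ)+c) ∣ (1 + (c:ℤ)*b) := by
      have e : (1 + (c:ℤ)*b) = ((a:ℤ)+c)*b - ((a:ℤ)*b - 1) := by ring
      rw [e]; exact dvd_sub (dvd_mul_right _ _) w3
    have e : m + c*j - ((a:ℤ)+c)*v
        = (1 + (c:ℤ)*b)*m - (c:ℤ)*((b:ℤ)*m - j) - ((a:ℤ)+c)*v := by ring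
    rw [e]
    exact dvd_sub (dvd_sub (w4.mul_right m) (w5.mul_left c)) (dvd_mul_right _ _)
  have hdvd : ((a:ℤ)+c)*c ∣ (m + c*j - ((a:ℤ)+c)*v) := cop.mul_dvd hdr hdc
  by_cases hvz : v = 0
  · rw [if_pos hvz]
    rw [hvz] at hdvd ⊢
    have hcase := int_dvd_cases (((a:ℤ)+c)*c) _ (by positivity) hdvd
      (by nlinarith) (by nlinarith)
    rcases hcase with h | h
    · exfalso; nlinarith
    · linarith
  · rw [if_neg hvz]
    have hv1 : 1 ≤ v := by omega
    have hcase := int_dvd_cases (((a:ℤ)+c)*c) _ (by positivity) hdvd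
      (by nlinarith) (by nlinarith)
    rcases hcase with h | h
    · linarith
    · exfalso; nlinarith

include ha hc hr hab hb1 hcop in
lemma lemB (m : ℤ) (hm1 : 1 ≤ m) (hm2 : m < (r:ℤ)) :
    (r:ℤ) * resi a b₁ m
      = m + (a:ℤ) * ((r:ℤ) - resi r b m) - (if resi a b₁ m = 0 then (r:ℤ)*(a:ℤ) else 0) := by
  have w3 : (r:ℤ) ∣ ((a:ℤ)*b - 1) := dvd_ab ha hc hr hab
  have hzrm := resi_eq_zero_iff ha hc hr hab m
  have cop := copZ ha hc hr hab hcop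
  subst hr
  push_cast at hm2 hzrm w3 ⊢
  set j := resi (a+c) b m with hj
  set u := resi a b₁ m with hu
  have haz : (0:ℤ) < a := by exact_mod_cast ha
  have hcz : (0:ℤ) < c := by exact_mod_cast hc
  have hj0 : 0 ≤ j := resi_nonneg (by omega) m
  have hjr : j < (a:ℤ) + c := by have := resi_lt (b := b) (k := a+c) (by omega) m; push_cast at this; omega
  have hu0 : 0 ≤ u := resi_nonneg ha m
  have hua : u < (a:ℤ) := by exact_mod_cast resi_lt (b := b₁) ha m
  have hj1 : 1 ≤ j := by
    rcases eq_or_lt_of_le hj0 with h | h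
    · exfalso
      have : ((a:ℤ)+c) ∣ m := hzrm.mp h.symm
      have := Int.le_of_dvd (by omega) this
      omega
    · omega
  have w1 : (a:ℤ) ∣ ((c:ℤ)*b₁ - 1) := dvd_cb1 hb1
  have w2 : (a:ℤ) ∣ ((b₁:ℤ)*m - u) := by rw [hu]; exact resi_sub_dvd a b₁ m
  have w5 : ((a:ℤ)+c) ∣ ((b:ℤ)*m - j) := by
    rw [hj]; have := resi_sub_dvd (a+c) b m; push_cast at this; exact this
  have hda : (a:ℤ) ∣ (m + a*(((a:ℤ)+c) - j) - ((a:ℤ)+c)*u) := by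
    have e : m + a*(((a:ℤ)+c) - j) - ((a:ℤ)+c)*u
        = -(((c:ℤ)*b₁ - 1)*m) + (c:ℤ)*((b₁:ℤ)*m - u) + (a:ℤ)*(((a:ℤ)+c) - j - u) := by ring
    rw [e]
    exact dvd_add (dvd_add ((w1.mul_right m).neg_right) (w2.mul_left c)) (dvd_mul_right _ _)
  have hdr : ((a:ℤ)+c) ∣ (m + a*(((a:ℤ)+c) - j) - ((a:ℤ)+c)*u) := by
    have e : m + a*(((a:ℤ)+c) - j) - ((a:ℤ)+c)*u
        = -(((a:ℤ)*b - 1)*m) + (a:ℤ)*((b:ℤ)*m - j) + ((a:ℤ)+c)*((a:ℤ) - u) := by ring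
    rw [e]
    exact dvd_add (dvd_add ((w3.mul_right m).neg_right) (w5.mul_left a)) (dvd_mul_right _ _)
  have hdvd : ((a:ℤ)+c)*a ∣ (m + a*(((a:ℤ)+c) - j) - ((a:ℤ)+c)*u) := cop.mul_dvd hdr hda
  by_cases huz : u = 0
  · rw [if_pos huz]
    rw [huz] at hdvd ⊢
    have hcase := int_dvd_cases (((a:ℤ)+c)*a) _ (by positivity) hdvd
      (by nlinarith) (by nlinarith)
    rcases hcase with h | h
    · exfalso; nlinarith
    · linarith
  · rw [if_neg huz]
    have hu1 : 1 ≤ u := by omega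
    have hcase := int_dvd_cases (((a:ℤ)+c)*a) _ (by positivity) hdvd
      (by nlinarith) (by nlinarith)
    rcases hcase with h | h
    · linarith
    · exfalso; nlinarith

include ha hc hr hab hb1 hb2 hcop in
lemma LL_base (m : ℤ) (h0 : 0 ≤ m) (h1 : m < (r:ℤ)) : LL r a c b b₁ b₂ m = 0 := by
  rcases eq_or_lt_of_le h0 with h | hm1
  · rw [← h]; simp [LL, fQ_zero]
  · have hA := lemA ha hc hr hab hb2 hcop m hm1 h1
    have hB := lemB ha hc hr hab hb1 hcop m hm1 h1
    subst hr
    unfold LL fQ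
    set j := resi (a+c) b m with hjd
    set u := resi a b₁ m with hud
    set v := resi c b₂ m with hvd
    push_cast at hA hB ⊢
    have haQ : (a:ℚ) ≠ 0 := by positivity
    have hcQ : (c:ℚ) ≠ 0 := by positivity
    have hacQ : (a:ℚ) + c ≠ 0 := by positivity
    have hacZ : ((a:ℤ) + c) ≠ 0 := by positivity
    by_cases huz : u = 0 <;> by_cases hvz : v = 0
    · -- u = 0, v = 0
      rw [if_pos huz] at hB
      rw [if_pos hvz] at hA
      have hmZ : m = (a:ℤ)*j := by linear_combination -hB + ((a:ℤ)+c)*huz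
      have hj3 : ((a:ℤ)+c) * j = ((a:ℤ)+c) * c := by
        linear_combination -hA - hmZ + ((a:ℤ)+c)*hvz
      have hjc : j = (c:ℤ) := mul_left_cancel₀ hacZ hj3
      have hmq : (m:ℚ) = (a:ℚ)*(c:ℚ) := by
        have : m = (a:ℤ)*c := by rw [hmZ, hjc]
        exact_mod_cast this
      have hjq : ((j:ℤ):ℚ) = (c:ℚ) := by exact_mod_cast hjc
      have huq : ((u:ℤ):ℚ) = 0 := by rw [huz]; simp
      have hvq : ((v:ℤ):ℚ) = 0 := by rw [hvz]; simp
      rw [hmq, hjq, huq, hvq]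
      field_simp
      ring
    · -- u = 0, v ≠ 0
      rw [if_pos huz] at hB
      rw [if_neg hvz] at hA
      have hmZ : m = (a:ℤ)*j := by linear_combination -hB + ((a:ℤ)+c)*huz
      have hj3 : ((a:ℤ)+c) * v = ((a:ℤ)+c) * j := by linear_combination hA + hmZ
      have hvj : v = j := mul_left_cancel₀ hacZ hj3
      have hmq : (m:ℚ) = (a:ℚ)*(j:ℚ) := by exact_mod_cast hmZ
      have hvq : ((v:ℤ):ℚ) = (j:ℚ) := by exact_mod_cast hvj
      have huq : ((u:ℤ):ℚ) = 0 := by rw [huz]; simp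
      rw [hmq, hvq, huq]
      field_simp
      ring
    · -- u ≠ 0, v = 0
      rw [if_neg huz] at hB
      rw [if_pos hvz] at hA
      have hmZ : m = (c:ℤ)*(((a:ℤ)+c) - j) := by linear_combination -hA + ((a:ℤ)+c)*hvz
      have hj3 : ((a:ℤ)+c) * u = ((a:ℤ)+c) * (((a:ℤ)+c) - j) := by linear_combination hB + hmZ
      have huj : u = ((a:ℤ)+c) - j := mul_left_cancel₀ hacZ hj3
      have hmq : (m:ℚ) = (c:ℚ)*(((a:ℚ)+c) - (j:ℚ)) := by exact_mod_cast hmZ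
      have huq : ((u:ℤ):ℚ) = ((a:ℚ)+c) - (j:ℚ) := by exact_mod_cast huj
      have hvq : ((v:ℤ):ℚ) = 0 := by rw [hvz]; simp
      rw [hmq, huq, hvq]
      field_simp
      ring
    · -- u ≠ 0, v ≠ 0
      rw [if_neg huz, sub_zero] at hB
      rw [if_neg hvz, sub_zero] at hA
      have huQ : ((a:ℚ)+c) * (u:ℚ) = (m:ℚ) + a*(((a:ℚ)+c) - j) := by exact_mod_cast hB
      have hvQ : ((a:ℚ)+c) * (v:ℚ) = (m:ℚ) + c*(j:ℚ) := by exact_mod_cast hA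
      have hu' : (u:ℚ) = ((m:ℚ) + a*(((a:ℚ)+c) - j)) / ((a:ℚ)+c) := by
        rw [eq_div_iff hacQ]; linear_combination huQ
      have hv' : (v:ℚ) = ((m:ℚ) + c*(j:ℚ)) / ((a:ℚ)+c) := by
        rw [eq_div_iff hacQ]; linear_combination hvQ
      rw [hu', hv']
      field_simp
      ring

include ha hc hr in
lemma LL_even (m : ℤ) : LL r a c b b₁ b₂ (-m) = LL r a c b b₁ b₂ m := by
  unfold LL
  rw [fQ_neg (show 0 < r by omega), fQ_neg ha, fQ_neg hc]
  push_cast; ring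

include ha hc hr hab hb1 hb2 hcop in
lemma LL_zero (m : ℤ) (h0 : -(r:ℤ) < m) (h1 : m < (r:ℤ)) : LL r a c b b₁ b₂ m = 0 := by
  rcases le_or_gt 0 m with h | h
  · exact LL_base ha hc hr hab hb1 hb2 hcop m h h1
  · have he := LL_even ha hc hr (r:=r) (b:=b) (b₁:=b₁) (b₂:=b₂) (-m)
    rw [neg_neg] at he
    rw [he]
    exact LL_base ha hc hr hab hb1 hb2 hcop (-m) (by omega) (by omega)

include ha hc hr hab in
lemma fr_diff (m : ℤ) :
    fQ r b (m - (a:ℤ)) + fQ r b (m - (c:ℤ))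
      = 2 * fQ r b m - 1/(r:ℚ) + (if (r:ℤ) ∣ m then 1 else 0) := by
  have hiff := resi_eq_zero_iff ha hc hr hab m
  have hrn : 0 < r := by omega
  have hRz : (0:ℤ) < (r:ℤ) := by exact_mod_cast hrn
  have hR2 : (2:ℤ) ≤ (r:ℤ) := by have := hr2 ha hc hr; exact_mod_cast this
  have hRQ : (r:ℚ) ≠ 0 := by positivity
  set j := resi r b m with hjd
  have hj0 : 0 ≤ j := resi_nonneg hrn m
  have hjR : j < (r:ℤ) := resi_lt hrn m
  have hba : ((b:ℤ) * a) % r = 1 := by rw [mul_comm]; exact hab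
  have hsha : resi r b (m - (a:ℤ)) = (j - 1) % (r:ℤ) := by
    rw [hjd, resi, resi, mul_sub, Int.sub_emod (((b:ℤ))*m), hba]
  have hshc : resi r b (m - (c:ℤ)) = (j + 1) % (r:ℤ) := by
    have hper : m - (c:ℤ) = (m + (a:ℤ)) + (r:ℤ)*(-1) := by
      have : (r:ℤ) = (a:ℤ) + c := by exact_mod_cast hr
      rw [this]; ring
    rw [hper, resi_period, hjd, resi, resi, mul_add, Int.add_emod ((b:ℤ)*m), hba]
  by_cases hjz : j = 0
  · rw [if_pos (hiff.mp hjz)]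
    have d1 : (j - 1) % (r:ℤ) = (r:ℤ) - 1 := by
      rw [hjz]
      have e : (0 - 1 : ℤ) = ((r:ℤ) - 1) + (r:ℤ)*(-1) := by ring
      rw [e, Int.add_mul_emod_self_left]
      exact Int.emod_eq_of_lt (by omega) (by omega)
    have d2 : (j + 1) % (r:ℤ) = 1 := by
      rw [hjz]; exact Int.emod_eq_of_lt (by omega) (by omega)
    rw [fQ_eq, fQ_eq, fQ_eq, hsha, hshc, d1, d2, ← hjd, hjz]
    push_cast
    field_simp
    ring
  · rw [if_neg (fun hdvd => hjz (hiff.mpr hdvd))]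
    by_cases hjtop : j = (r:ℤ) - 1
    · have d1 : (j - 1) % (r:ℤ) = (r:ℤ) - 2 := by
        rw [hjtop]
        have e : ((r:ℤ) - 1 - 1 : ℤ) = (r:ℤ) - 2 := by ring
        rw [e]; exact Int.emod_eq_of_lt (by omega) (by omega)
      have d2 : (j + 1) % (r:ℤ) = 0 := by
        rw [hjtop]
        have e : ((r:ℤ) - 1 + 1 : ℤ) = 0 + (r:ℤ)*1 := by ring
        rw [e, Int.add_mul_emod_self_left]
        exact Int.emod_eq_of_lt (by omega) (by omega)
      rw [fQ_eq, fQ_eq, fQ_eq, hsha, hshc, d1, d2, ← hjd, hjtop]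
      push_cast
      field_simp
      ring
    · have d1 : (j - 1) % (r:ℤ) = j - 1 := Int.emod_eq_of_lt (by omega) (by omega)
      have d2 : (j + 1) % (r:ℤ) = j + 1 := Int.emod_eq_of_lt (by omega) (by omega)
      rw [fQ_eq, fQ_eq, fQ_eq, hsha, hshc, d1, d2, ← hjd]
      push_cast
      field_simp
      ring

include ha hc hr hab in
lemma LL_dia (m : ℤ) :
    LL r a c b b₁ b₂ m - LL r a c b b₁ b₂ (m - (a:ℤ)) - LL r a c b b₁ b₂ (m - (c:ℤ))
      + LL r a c b b₁ b₂ (m - (r:ℤ))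
      = if (r:ℤ) ∣ m then 1 else 0 := by
  have key := fr_diff ha hc hr hab m
  have hrQ : (r:ℚ) = (a:ℚ) + c := by exact_mod_cast hr
  have hrcZ : (r:ℤ) = (a:ℤ) + c := by exact_mod_cast hr
  have haQ : (a:ℚ) ≠ 0 := by positivity
  have hcQ : (c:ℚ) ≠ 0 := by positivity
  have e1 : fQ a b₁ (m - (a:ℤ)) = fQ a b₁ m := by
    have e : m - (a:ℤ) = m + (a:ℤ)*(-1) := by ring
    rw [e, fQ_period]
  have e2 : fQ a b₁ (m - (c:ℤ)) = fQ a b₁ (m - (r:ℤ)) := by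
    have e : m - (c:ℤ) = (m - (r:ℤ)) + (a:ℤ)*1 := by rw [hrcZ]; ring
    rw [e, fQ_period]
  have e3 : fQ c b₂ (m - (c:ℤ)) = fQ c b₂ m := by
    have e : m - (c:ℤ) = m + (c:ℤ)*(-1) := by ring
    rw [e, fQ_period]
  have e4 : fQ c b₂ (m - (a:ℤ)) = fQ c b₂ (m - (r:ℤ)) := by
    have e : m - (a:ℤ) = (m - (r:ℤ)) + (c:ℤ)*1 := by rw [hrcZ]; ring
    rw [e, fQ_period]
  have e5 : fQ r b (m - (r:ℤ)) = fQ r b m := by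
    have e : m - (r:ℤ) = m + (r:ℤ)*(-1) := by ring
    rw [e, fQ_period]
  unfold LL
  rw [e1, e2, e3, e4, e5]
  have hq : ((m:ℚ))^2/(2*(r:ℚ)*a*c) - ((m:ℚ)-a)^2/(2*(r:ℚ)*a*c)
      - ((m:ℚ)-c)^2/(2*(r:ℚ)*a*c) + ((m:ℚ)-r)^2/(2*(r:ℚ)*a*c) = 1/(r:ℚ) := by
    rw [hrQ]
    have : (a:ℚ)+c ≠ 0 := by positivity
    field_simp
    ring
  push_cast
  linear_combination key + hq

noncomputable def LT (r a c b b₁ b₂ : ℕ) (m : ℤ) : ℚ :=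
  if 0 ≤ m then LL r a c b b₁ b₂ m else 0

include ha hc hr hab hb1 hb2 hcop in
lemma LT_small (m : ℤ) (h : m < (r:ℤ)) : LT r a c b b₁ b₂ m = 0 := by
  unfold LT
  split_ifs with h0
  · exact LL_base ha hc hr hab hb1 hb2 hcop m h0 h
  · rfl

include ha hc hr hab hb1 hb2 hcop in
lemma LT_eq (m : ℤ) (h : -(r:ℤ) < m) : LT r a c b b₁ b₂ m = LL r a c b b₁ b₂ m := by
  unfold LT
  split_ifs with h0
  · rfl
  · exact (LL_zero ha hc hr hab hb1 hb2 hcop m h (by omega)).symm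

include ha hc hr hab hb1 hb2 hcop in
lemma LT_main (m : ℤ) (h0 : 0 ≤ m) :
    LT r a c b b₁ b₂ m - LT r a c b b₁ b₂ (m - (a:ℤ)) - LT r a c b b₁ b₂ (m - (c:ℤ))
      - LT r a c b b₁ b₂ (m - (r:ℤ)) + LT r a c b b₁ b₂ (m - ((a:ℤ)+(c:ℤ)))
      + LT r a c b b₁ b₂ (m - ((a:ℤ)+(r:ℤ))) + LT r a c b b₁ b₂ (m - ((c:ℤ)+(r:ℤ)))
      - LT r a c b b₁ b₂ (m - ((a:ℤ)+(c:ℤ)+(r:ℤ)))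
      = if m = (r:ℤ) then 1 else 0 := by
  have haz : (0:ℤ) < a := by exact_mod_cast ha
  have hcz : (0:ℤ) < c := by exact_mod_cast hc
  have hrcZ : (r:ℤ) = (a:ℤ) + c := by exact_mod_cast hr
  have S := LT_small ha hc hr hab hb1 hb2 hcop
  have E := LT_eq ha hc hr hab hb1 hb2 hcop
  rcases lt_trichotomy m (r:ℤ) with hlt | heq | hgt
  · rw [S m hlt, S _ (by omega : m - (a:ℤ) < (r:ℤ)), S _ (by omega : m - (c:ℤ) < (r:ℤ)),
      S _ (by omega : m - (r:ℤ) < (r:ℤ)), S _ (by omega : m - ((a:ℤ)+(c:ℤ)) < (r:ℤ)),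
      S _ (by omega : m - ((a:ℤ)+(r:ℤ)) < (r:ℤ)), S _ (by omega : m - ((c:ℤ)+(r:ℤ)) < (r:ℤ)),
      S _ (by omega : m - ((a:ℤ)+(c:ℤ)+(r:ℤ)) < (r:ℤ)), if_neg (by omega : ¬ m = (r:ℤ))]
    ring
  · subst heq
    rw [if_pos rfl]
    rw [E _ (by omega), S _ (by omega : (r:ℤ) - (a:ℤ) < (r:ℤ)), S _ (by omega : (r:ℤ) - (c:ℤ) < (r:ℤ)),
      S _ (by omega : (r:ℤ) - (r:ℤ) < (r:ℤ)), S _ (by omega : (r:ℤ) - ((a:ℤ)+(c:ℤ)) < (r:ℤ)),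
      S _ (by omega : (r:ℤ) - ((a:ℤ)+(r:ℤ)) < (r:ℤ)), S _ (by omega : (r:ℤ) - ((c:ℤ)+(r:ℤ)) < (r:ℤ)),
      S _ (by omega : (r:ℤ) - ((a:ℤ)+(c:ℤ)+(r:ℤ)) < (r:ℤ))]
    have d := LL_dia (b₁:=b₁) (b₂:=b₂) ha hc hr hab (r:ℤ)
    rw [if_pos dvd_rfl] at d
    have ea : (r:ℤ) - (a:ℤ) = (c:ℤ) := by omega
    have ec : (r:ℤ) - (c:ℤ) = (a:ℤ) := by omega
    have er : (r:ℤ) - (r:ℤ) = 0 := by omega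
    rw [ea, ec, er] at d
    rw [LL_zero ha hc hr hab hb1 hb2 hcop (c:ℤ) (by omega) (by omega),
      LL_zero ha hc hr hab hb1 hb2 hcop (a:ℤ) (by omega) (by omega),
      LL_zero ha hc hr hab hb1 hb2 hcop 0 (by omega) (by omega)] at d
    linarith
  · have e6 : m - ((a:ℤ)+(c:ℤ)) = m - (r:ℤ) := by omega
    have e7 : m - ((a:ℤ)+(r:ℤ)) = m - (r:ℤ) - (a:ℤ) := by ring
    have e8 : m - ((c:ℤ)+(r:ℤ)) = m - (r:ℤ) - (c:ℤ) := by ring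
    have e9 : m - ((a:ℤ)+(c:ℤ)+(r:ℤ)) = m - (r:ℤ) - (r:ℤ) := by omega
    rw [e6, e7, e8, e9]
    rw [E m (by omega), E _ (by omega : -(r:ℤ) < m - (a:ℤ)), E _ (by omega : -(r:ℤ) < m - (c:ℤ)),
      E _ (by omega : -(r:ℤ) < m - (r:ℤ)), E _ (by omega : -(r:ℤ) < m - (r:ℤ) - (a:ℤ)),
      E _ (by omega : -(r:ℤ) < m - (r:ℤ) - (c:ℤ)), E _ (by omega : -(r:ℤ) < m - (r:ℤ) - (r:ℤ))]
    have d1 := LL_dia (b₁:=b₁) (b₂:=b₂) ha hc hr hab m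
    have d2 := LL_dia (b₁:=b₁) (b₂:=b₂) ha hc hr hab (m - (r:ℤ))
    have hdd : ((r:ℤ) ∣ m - (r:ℤ)) ↔ ((r:ℤ) ∣ m) := by
      constructor
      · intro h; have := dvd_add h (dvd_refl (r:ℤ)); simpa using this
      · intro h; exact dvd_sub h dvd_rfl
    rw [if_neg (by omega : ¬ m = (r:ℤ))]
    by_cases hd : (r:ℤ) ∣ m
    · rw [if_pos hd] at d1
      rw [if_pos (hdd.mpr hd)] at d2
      linarith
    · rw [if_neg hd] at d1
      rw [if_neg (fun hx => hd (hdd.mp hx))] at d2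
      linarith

end ctx


open PowerSeries in
lemma cube_mk : ((1 - X)^3 : ℚ⟦X⟧) * PowerSeries.mk (fun n => ((n:ℚ)^2)) = X + X^2 := by
  have expand : ∀ S : ℚ⟦X⟧, ((1 - X)^3 : ℚ⟦X⟧) * S
      = S - X^1*S - X^1*S - X^1*S + X^2*S + X^2*S + X^2*S - X^3*S := by
    intro S; ring
  rw [expand]
  ext n
  simp only [map_sub, map_add, PowerSeries.coeff_X_pow_mul', PowerSeries.coeff_mk,
    PowerSeries.coeff_X, PowerSeries.coeff_X_pow]
  rcases n with _|n
  · norm_num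
  rcases n with _|n
  · norm_num
  rcases n with _|n
  · norm_num
  · have e1 : n + 1 + 1 + 1 - 1 = n + 2 := by omega
    have e2 : n + 1 + 1 + 1 - 2 = n + 1 := by omega
    have e3 : n + 1 + 1 + 1 - 3 = n := by omega
    rw [if_pos (by omega), if_pos (by omega), if_pos (by omega), if_neg (by omega),
      if_neg (by omega), e1, e2, e3]
    push_cast
    ring

section psec
variable {r a c b b₁ b₂ : ℕ}
  (ha : 0 < a) (hc : 0 < c) (hr : r = a + c)
  (hab : ((a:ℤ) * b) % r = 1)
  (hb1 : ((c:ℤ) * b₁) % a = 1 % a)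
  (hb2 : ((a:ℤ) * b₂) % c = 1 % c)
  (hcop : Nat.Coprime a r)

open PowerSeries in
lemma fQ_cast (k β : ℕ) (n : ℕ) :
    fQ k β (n:ℤ)
      = (((β * n) % k : ℕ) : ℚ) * ((k : ℚ) - (((β * n) % k : ℕ) : ℚ)) / (2 * (k : ℚ)) := by
  have e : (((β * n) % k : ℕ) : ℚ) = ((((β:ℤ) * (n:ℤ)) % (k:ℤ) : ℤ) : ℚ) := by
    exact_mod_cast rfl
  unfold fQ resi
  rw [e]

open PowerSeries in
lemma Pk (k β : ℕ) (hk : 1 ≤ k) :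
    ((1 - X^k : ℚ⟦X⟧)) * PowerSeries.mk (fun n => fQ k β (n:ℤ))
      = ∑ i ∈ Finset.Icc 1 (k - 1),
          PowerSeries.C (R := ℚ) ((((β * i) % k : ℕ) : ℚ) * ((k : ℚ) - (((β * i) % k : ℕ) : ℚ)) / (2 * (k : ℚ)))
            * X^i := by
  ext n
  rw [sub_mul, one_mul, map_sub, PowerSeries.coeff_X_pow_mul', map_sum]
  simp only [PowerSeries.coeff_C_mul, PowerSeries.coeff_X_pow, PowerSeries.coeff_mk,
    mul_ite, mul_one, mul_zero]
  rw [Finset.sum_ite_eq (Finset.Icc 1 (k-1)) n]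
  rcases Nat.lt_or_ge n k with h | h
  · rw [if_neg (by omega : ¬ k ≤ n)]
    rcases Nat.eq_zero_or_pos n with h0 | h0
    · subst h0
      rw [if_neg (by simp : (0:ℕ) ∉ Finset.Icc 1 (k-1))]
      simp [fQ_zero]
    · rw [if_pos (by simp [Finset.mem_Icc]; omega : n ∈ Finset.Icc 1 (k-1)), fQ_cast, sub_zero]
  · rw [if_pos h, if_neg (by simp [Finset.mem_Icc]; omega : n ∉ Finset.Icc 1 (k-1))]
    have e : ((n - k : ℕ) : ℤ) = (n:ℤ) + (k:ℤ)*(-1) := by omega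
    rw [e, fQ_period]
    ring

open PowerSeries in
include ha hc hr hab hb1 hb2 hcop in
lemma P5 :
    ((1 - X^r) * (1 - X^a) * (1 - X^c) : ℚ⟦X⟧)
        * PowerSeries.mk (fun n => LL r a c b b₁ b₂ (n:ℤ))
      = X^r := by
  have expand : ∀ S : ℚ⟦X⟧, ((1 - X^r) * (1 - X^a) * (1 - X^c)) * S
      = S - X^a*S - X^c*S - X^r*S + X^(a+c)*S + X^(a+r)*S + X^(c+r)*S - X^(a+c+r)*S := by
    intro S; rw [pow_add, pow_add, pow_add, pow_add]; ring
  rw [expand]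
  ext n
  simp only [map_sub, map_add, PowerSeries.coeff_X_pow_mul', PowerSeries.coeff_mk,
    PowerSeries.coeff_X_pow]
  have hcut : ∀ k : ℕ, (if k ≤ n then LL r a c b b₁ b₂ (((n - k : ℕ)):ℤ) else 0)
      = LT r a c b b₁ b₂ ((n:ℤ) - (k:ℤ)) := by
    intro k
    by_cases h : k ≤ n
    · rw [if_pos h]
      unfold LT
      rw [if_pos (by omega : (0:ℤ) ≤ (n:ℤ) - (k:ℤ))]
      congr 1
      omega
    · rw [if_neg h]
      unfold LT
      rw [if_neg (by omega : ¬ (0:ℤ) ≤ (n:ℤ) - (k:ℤ))]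
  rw [hcut a, hcut c, hcut r, hcut (a+c), hcut (a+r), hcut (c+r), hcut (a+c+r)]
  have main := LT_main ha hc hr hab hb1 hb2 hcop (n:ℤ) (by omega)
  push_cast
  push_cast at main
  have h00 : LL r a c b b₁ b₂ ((n:ℕ):ℤ) = LT r a c b b₁ b₂ ((n:ℕ):ℤ) := by
    unfold LT
    rw [if_pos (by omega : (0:ℤ) ≤ ((n:ℕ):ℤ))]
  rw [h00, main]
  simp [Nat.cast_inj]

end psec
section laurent
open PowerSeries LaurentSeries

lemma psne {f : ℚ⟦X⟧} (hf : f ≠ 0) : (↑f : LaurentSeries ℚ) ≠ 0 :=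
  fun h => hf (HahnSeries.ofPowerSeries_injective (h.trans (map_zero _).symm))

lemma one_sub_pow_ne (k : ℕ) (hk : 1 ≤ k) : (1 - X^k : ℚ⟦X⟧) ≠ 0 := by
  intro h0
  have h1 := congrArg (PowerSeries.constantCoeff) h0
  simp [map_pow, PowerSeries.constantCoeff_X, zero_pow (by omega : k ≠ 0)] at h1

lemma ratCoe_sum {s : Finset ℕ} (F : ℕ → RatFunc ℚ) :
    ((∑ i ∈ s, F i : RatFunc ℚ) : LaurentSeries ℚ) = ∑ i ∈ s, ((F i) : LaurentSeries ℚ) := by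
  exact map_sum _ _ _

lemma psCoe_sum {s : Finset ℕ} (F : ℕ → ℚ⟦X⟧) :
    ((∑ i ∈ s, F i : ℚ⟦X⟧) : LaurentSeries ℚ) = ∑ i ∈ s, ((F i) : LaurentSeries ℚ) :=
  map_sum (HahnSeries.ofPowerSeries ℤ ℚ) F s

lemma one_sub_single_ne (k : ℕ) (hk : 1 ≤ k) :
    (1 - (HahnSeries.single 1 1 : LaurentSeries ℚ)^k) ≠ 0 := by
  have := psne (one_sub_pow_ne k hk)
  simpa [PowerSeries.coe_sub, PowerSeries.coe_one, PowerSeries.coe_pow,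
    PowerSeries.coe_X] using this

lemma ratCoe_C (r : ℚ) : ((RatFunc.C r : RatFunc ℚ) : LaurentSeries ℚ) = HahnSeries.C r := by
  simp

lemma ratCoe_injective : Function.Injective (fun f : RatFunc ℚ => (f : LaurentSeries ℚ)) := by
  open scoped RatFunc in exact (algebraMap (RatFunc ℚ) (LaurentSeries ℚ)).injective

/-- coercion of `Tterm` to Laurent series equals the periodic power series. -/
lemma Tcoe (k β : ℕ) (hk : 1 ≤ k) :
    ((Tterm k β : RatFunc ℚ) : LaurentSeries ℚ)
      = ((PowerSeries.mk (fun n => fQ k β (n:ℤ)) : ℚ⟦X⟧) : LaurentSeries ℚ) := by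
  have hne : (1 - (HahnSeries.single 1 1)^k : LaurentSeries ℚ) ≠ 0 := by
    have := psne (one_sub_pow_ne k hk)
    simpa [PowerSeries.coe_sub, PowerSeries.coe_one, PowerSeries.coe_pow,
      PowerSeries.coe_X] using this
  have hPk := congrArg (fun f : ℚ⟦X⟧ => (f : LaurentSeries ℚ)) (Pk k β hk)
  simp only [PowerSeries.coe_mul, PowerSeries.coe_sub, PowerSeries.coe_one,
    PowerSeries.coe_pow, PowerSeries.coe_X] at hPk
  rw [psCoe_sum] at hPk
  simp only [PowerSeries.coe_mul, PowerSeries.coe_C, PowerSeries.coe_pow,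
    PowerSeries.coe_X] at hPk
  unfold Tterm
  rw [map_mul, map_div₀, map_one, ratCoe_sum]
  simp only [map_mul, map_sub, map_one, map_pow,
    RatFunc.coe_X, ratCoe_C]
  rw [← hPk, one_div, inv_mul_cancel_left₀ hne]

end laurent
open PowerSeries in
lemma P_q {r a c : ℕ} (ha : 0 < a) (hc : 0 < c) (hrp : 0 < r) :
    ((2:ℚ⟦X⟧)*(1 - X)^3 * C (R := ℚ) ((r:ℚ)*(a:ℚ)*(c:ℚ)))
        * PowerSeries.mk (fun n => ((n:ℚ))^2/(2*(r:ℚ)*(a:ℚ)*(c:ℚ)))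
      = X*(1+X) := by
  have hK : (r:ℚ)*(a:ℚ)*(c:ℚ) ≠ 0 := by positivity
  have h1 : (C (R := ℚ) ((r:ℚ)*(a:ℚ)*(c:ℚ))) * PowerSeries.mk (fun n => ((n:ℚ))^2/(2*(r:ℚ)*(a:ℚ)*(c:ℚ)))
      = C (R := ℚ) (1/2) * PowerSeries.mk (fun n => ((n:ℚ))^2) := by
    ext n
    simp only [PowerSeries.coeff_C_mul, PowerSeries.coeff_mk]
    field_simp
  have h2 : (2:ℚ⟦X⟧) * C (R := ℚ) (1/2) = 1 := by
    rw [show (2:ℚ⟦X⟧) = C (R := ℚ) 2 from (map_ofNat (C (R := ℚ)) 2).symm, ← map_mul]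
    norm_num
  calc ((2:ℚ⟦X⟧)*(1 - X)^3 * C (R := ℚ) ((r:ℚ)*(a:ℚ)*(c:ℚ)))
        * PowerSeries.mk (fun n => ((n:ℚ))^2/(2*(r:ℚ)*(a:ℚ)*(c:ℚ)))
      = (2:ℚ⟦X⟧)*(1 - X)^3 * (C (R := ℚ) ((r:ℚ)*(a:ℚ)*(c:ℚ)) * PowerSeries.mk (fun n => ((n:ℚ))^2/(2*(r:ℚ)*(a:ℚ)*(c:ℚ)))) := by
        ring
    _ = (2:ℚ⟦X⟧)*(1 - X)^3 * (C (R := ℚ) (1/2) * PowerSeries.mk (fun n => ((n:ℚ))^2)) := by rw [h1]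
    _ = ((2:ℚ⟦X⟧) * C (R := ℚ) (1/2)) * ((1 - X)^3 * PowerSeries.mk (fun n => ((n:ℚ))^2)) := by ring
    _ = ((2:ℚ⟦X⟧) * C (R := ℚ) (1/2)) * (X + X^2) := by rw [cube_mk]
    _ = X*(1+X) := by rw [h2]; ring

section ctx2
open PowerSeries
variable {r a c b b₁ b₂ : ℕ}
  (ha : 0 < a) (hc : 0 < c) (hr : r = a + c)

lemma mk_LL_eq :
    PowerSeries.mk (fun n => LL r a c b b₁ b₂ (n:ℤ))
      = PowerSeries.mk (fun n => ((n:ℚ))^2/(2*(r:ℚ)*(a:ℚ)*(c:ℚ)))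
        - PowerSeries.mk (fun n => fQ r b (n:ℤ))
        + PowerSeries.mk (fun n => fQ a b₁ (n:ℤ))
        + PowerSeries.mk (fun n => fQ c b₂ (n:ℤ)) := by
  ext n
  simp only [map_sub, map_add, PowerSeries.coeff_mk]
  rfl

open LaurentSeries in
lemma ps2 : ((2:ℚ⟦X⟧) : LaurentSeries ℚ) = 2 :=
  map_ofNat (HahnSeries.ofPowerSeries ℤ ℚ) 2

open LaurentSeries in
lemma rat2 : ((2:RatFunc ℚ) : LaurentSeries ℚ) = 2 := by
  exact map_ofNat _ 2

open LaurentSeries in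
include ha hc in
lemma denom1_ne (hrp : 0 < r) :
    ((2:LaurentSeries ℚ)*(1 - (HahnSeries.single 1 1 : LaurentSeries ℚ))^3
      * HahnSeries.C ((r:ℚ)*(a:ℚ)*(c:ℚ))) ≠ 0 := by
  have hK : (r:ℚ)*(a:ℚ)*(c:ℚ) ≠ 0 := by positivity
  have hps : ((2:ℚ⟦X⟧)*(1 - X)^3 * C (R := ℚ) ((r:ℚ)*(a:ℚ)*(c:ℚ))) ≠ 0 := by
    intro h0
    have h1 := congrArg (PowerSeries.constantCoeff) h0
    simp [map_ofNat, PowerSeries.constantCoeff_X, hK] at h1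
  have hco : (((2:ℚ⟦X⟧)*(1 - X)^3 * C (R := ℚ) ((r:ℚ)*(a:ℚ)*(c:ℚ)) : ℚ⟦X⟧) : LaurentSeries ℚ)
      = (2:LaurentSeries ℚ)*(1 - (HahnSeries.single 1 1 : LaurentSeries ℚ))^3
        * HahnSeries.C ((r:ℚ)*(a:ℚ)*(c:ℚ)) := by
    rw [PowerSeries.coe_mul, PowerSeries.coe_mul, PowerSeries.coe_pow, PowerSeries.coe_sub,
      PowerSeries.coe_one, PowerSeries.coe_X, PowerSeries.coe_C, ps2]
  rw [← hco]
  exact psne hps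

end ctx2

end S10

/-- Effect of a Type I projection on the K3 Hilbert series:
`t(1+t)/(2(1-t)³·r·a·(r-a)) − T_b^r + T_{b₁}^a + T_{b₂}^{r-a}
  = t^r/((1-t^r)(1-t^a)(1-t^{r-a}))` in `ℚ(t)`. -/
theorem typeI_projection_hilbert_series (r a b b₁ b₂ : ℕ)
    (hr : 2 ≤ r) (ha0 : 0 < a) (har : a < r) (hcop : Nat.Coprime a r)
    (hb1 : 1 ≤ b) (hb2 : b ≤ r - 1) (hb : (a * b) % r = 1)
    (hb₁a : b₁ ≤ a - 1) (hb₁ : (r * b₁) % a = 1 % a)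
    (hb₂a : b₂ ≤ (r - a) - 1) (hb₂ : (r * b₂) % (r - a) = 1 % (r - a)) :
    RatFunc.X * (1 + RatFunc.X) /
        (2 * (1 - RatFunc.X) ^ 3 * RatFunc.C ((r : ℚ) * (a : ℚ) * ((r : ℚ) - (a : ℚ))))
      - Tterm r b + Tterm a b₁ + Tterm (r - a) b₂
    = RatFunc.X ^ r /
        ((1 - RatFunc.X ^ r) * (1 - RatFunc.X ^ a) * (1 - RatFunc.X ^ (r - a))) := by
  have hc : 0 < r - a := by omega
  have hrr : r = a + (r - a) := by omega
  have habZ : ((a:ℤ) * b) % r = 1 := by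
    have h := congrArg (Nat.cast : ℕ → ℤ) hb
    push_cast at h
    exact h
  have hb1Z : ((r:ℤ) * b₁) % a = 1 % a := by
    have h := congrArg (Nat.cast : ℕ → ℤ) hb₁
    push_cast at h
    exact h
  have hb2Z : ((r:ℤ) * b₂) % ((r-a:ℕ):ℤ) = 1 % ((r-a:ℕ):ℤ) := by
    have h := congrArg (Nat.cast : ℕ → ℤ) hb₂
    push_cast at h
    exact h
  have hb1' : (((r - a : ℕ):ℤ) * b₁) % a = 1 % a := by
    have e : ((r - a : ℕ):ℤ) * (b₁:ℤ) = (r:ℤ)*b₁ + (a:ℤ)*(-(b₁:ℤ)) := by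
      rw [Nat.cast_sub (le_of_lt har)]; ring
    rw [e, Int.add_mul_emod_self_left]
    exact hb1Z
  have hb2' : ((a:ℤ) * b₂) % ((r-a:ℕ):ℤ) = 1 % ((r-a:ℕ):ℤ) := by
    have e : (a:ℤ) * (b₂:ℤ) = (r:ℤ)*b₂ + ((r-a:ℕ):ℤ)*(-(b₂:ℤ)) := by
      rw [Nat.cast_sub (le_of_lt har)]; ring
    rw [e, Int.add_mul_emod_self_left]
    exact hb2Z
  apply S10.ratCoe_injective
  simp only [map_add, map_sub, map_div₀, map_mul,
    map_pow, RatFunc.coe_X, S10.ratCoe_C, map_one, S10.rat2]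
  rw [← map_sub (HahnSeries.C (Γ := ℤ) (R := ℚ)), ← map_mul (HahnSeries.C (Γ := ℤ) (R := ℚ)),
    ← map_mul (HahnSeries.C (Γ := ℤ) (R := ℚ))]
  rw [S10.Tcoe r b (by omega), S10.Tcoe a b₁ (by omega), S10.Tcoe (r-a) b₂ (by omega)]
  have eK : (r:ℚ)*(a:ℚ)*((r:ℚ)-(a:ℚ)) = (r:ℚ)*(a:ℚ)*(((r-a:ℕ)):ℚ) := by
    rw [Nat.cast_sub (le_of_lt har)]
  rw [eK]
  have hne1 := S10.denom1_ne (r:=r) ha0 hc (by omega)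
  have hprodne : ((1 - (HahnSeries.single 1 1 : LaurentSeries ℚ)^r)
      * (1 - (HahnSeries.single 1 1 : LaurentSeries ℚ)^a)
      * (1 - (HahnSeries.single 1 1 : LaurentSeries ℚ)^(r-a))) ≠ 0 :=
    mul_ne_zero (mul_ne_zero (S10.one_sub_single_ne r (by omega))
      (S10.one_sub_single_ne a (by omega))) (S10.one_sub_single_ne (r-a) (by omega))
  have hP5 := congrArg (fun f : PowerSeries ℚ => (f : LaurentSeries ℚ))
    (S10.P5 ha0 hc hrr habZ hb1' hb2' hcop)
  simp only [PowerSeries.coe_mul, PowerSeries.coe_sub, PowerSeries.coe_one,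
    PowerSeries.coe_pow, PowerSeries.coe_X] at hP5
  have hPq := congrArg (fun f : PowerSeries ℚ => (f : LaurentSeries ℚ))
    (S10.P_q (r:=r) (a:=a) (c:=r-a) ha0 hc (by omega))
  simp only [PowerSeries.coe_mul, PowerSeries.coe_sub, PowerSeries.coe_add,
    PowerSeries.coe_one, PowerSeries.coe_pow, PowerSeries.coe_X, PowerSeries.coe_C,
    S10.ps2] at hPq
  have hq1 : (HahnSeries.single 1 1 : LaurentSeries ℚ) * (1 + HahnSeries.single 1 1)
      / ((2:LaurentSeries ℚ)*(1 - (HahnSeries.single 1 1 : LaurentSeries ℚ))^3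
          * HahnSeries.C ((r:ℚ)*(a:ℚ)*(((r-a:ℕ)):ℚ)))
      = ((PowerSeries.mk (fun n => ((n:ℚ))^2/(2*(r:ℚ)*(a:ℚ)*(((r-a:ℕ)):ℚ))) : PowerSeries ℚ)
          : LaurentSeries ℚ) := by
    rw [div_eq_iff hne1]
    linear_combination -hPq
  rw [hq1, eq_div_iff hprodne]
  rw [← PowerSeries.coe_sub, ← PowerSeries.coe_add, ← PowerSeries.coe_add]
  rw [← S10.mk_LL_eq]
  rw [mul_comm]
  exact hP5
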